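/- arXiv:0704.0918 — 3 statements merged into one kernel-verified Lean document; each statement's English description precedes it below -/
import Mathlib

section
/- Let X be an n-dimensional Gaussian random vector with mean μ and positive definite covariance matrix Σ, and let A, B, C be pairwise disjoint subsets of {1,...,n}. Then the conditional independence statement A ⫫ B | C holds for X if and only if the submatrix Σ_{A∪C, B∪C} has rank at most |C|. -/
open Matrix

/-- The conditional independence statement `A ⫫ B | C` for a Gaussian random vector
`X ~ N(μ, Σ)`: the covariance of the conditional distribution of `(X_A, X_B)` given
`X_C` has vanishing `A,B`-block, i.e. the Schur complement
`Σ_{A,B} − Σ_{A,C} Σ_{C,C}⁻¹ Σ_{C,B}` is zero.  (For a Gaussian this is equivalent to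
the factorization of the conditional density.) -/
def GaussianCondIndep {n : ℕ} (μ : Fin n → ℝ) (S : Matrix (Fin n) (Fin n) ℝ)
    (A B C : Finset (Fin n)) : Prop :=
  S.submatrix (fun a : ↥A => (a : Fin n)) (fun b : ↥B => (b : Fin n)) -
      S.submatrix (fun a : ↥A => (a : Fin n)) (fun c : ↥C => (c : Fin n)) *
        (S.submatrix (fun c : ↥C => (c : Fin n)) (fun c : ↥C => (c : Fin n)))⁻¹ *
        S.submatrix (fun c : ↥C => (c : Fin n)) (fun b : ↥B => (b : Fin n)) = 0

lemma rank_submatrix_le' {l m o p : Type*} [Fintype l] [Fintype m] [Fintype o] [Fintype p]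
    [DecidableEq m] [DecidableEq o]
    (A : Matrix m o ℝ) (f : l → m) (g : p → o) :
    (A.submatrix f g).rank ≤ A.rank := by
  have h1 : ((1 : Matrix m m ℝ).submatrix f (Equiv.refl m)) * A = A.submatrix f id := by
    rw [one_submatrix_mul]; rfl
  have h2 : (A.submatrix f id) * ((1 : Matrix o o ℝ).submatrix (Equiv.refl o) g)
      = A.submatrix f g := by
    rw [mul_submatrix_one]; rfl
  calc (A.submatrix f g).rank
      = ((A.submatrix f id) * ((1 : Matrix o o ℝ).submatrix (Equiv.refl o) g)).rank := by
        rw [h2]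
    _ ≤ (A.submatrix f id).rank := rank_mul_le_left _ _
    _ = (((1 : Matrix m m ℝ).submatrix f (Equiv.refl m)) * A).rank := by rw [h1]
    _ ≤ A.rank := rank_mul_le_right _ _

lemma posDef_submatrix' {n : ℕ} {S : Matrix (Fin n) (Fin n) ℝ} (hS : S.PosDef)
    (C : Finset (Fin n)) :
    (S.submatrix (fun c : ↥C => (c : Fin n)) (fun c : ↥C => (c : Fin n))).PosDef := by
  classical
  refine PosDef.of_dotProduct_mulVec_pos (hS.1.submatrix _) fun x hx => ?_
  set y : Fin n → ℝ := fun i => if h : i ∈ C then x ⟨i, h⟩ else 0 with hy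
  have hsum : ∀ f : Fin n → ℝ, ∑ i, y i * f i = ∑ c : ↥C, x c * f c := by
    intro f
    calc ∑ i, y i * f i = ∑ i ∈ C, y i * f i :=
          (Finset.sum_subset C.subset_univ (fun i _ hi => by simp [hy, hi])).symm
      _ = ∑ c : ↥C, y ↑c * f ↑c := (Finset.sum_coe_sort C _).symm
      _ = ∑ c : ↥C, x c * f ↑c := by
          refine Finset.sum_congr rfl fun c _ => ?_
          simp [hy, c.2]
  have hy0 : y ≠ 0 := by
    intro h
    apply hx
    funext c
    have := congrFun h (c : Fin n)
    simpa [hy, c.2] using this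
  have key : dotProduct (star x)
      ((S.submatrix (fun c : ↥C => (c : Fin n)) (fun c : ↥C => (c : Fin n))) *ᵥ x)
      = dotProduct (star y) (S *ᵥ y) := by
    simp only [star_trivial, dotProduct, mulVec, submatrix_apply]
    rw [hsum fun i => ∑ j, S i j * y j]
    refine Finset.sum_congr rfl fun c _ => ?_
    congr 1
    refine Eq.symm ?_
    calc ∑ j, S (c : Fin n) j * y j = ∑ j, y j * S (c : Fin n) j := by
          exact Finset.sum_congr rfl fun j _ => mul_comm _ _
      _ = ∑ c' : ↥C, x c' * S (c : Fin n) c' := hsum _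
      _ = ∑ c' : ↥C, S (c : Fin n) c' * x c' :=
          Finset.sum_congr rfl fun c' _ => mul_comm _ _
  rw [key]
  exact hS.dotProduct_mulVec_pos hy0

/-- For an `n`-dimensional Gaussian vector with mean `μ` and positive definite
covariance matrix `Σ`, and pairwise disjoint `A, B, C ⊆ {1,…,n}`, the conditional
independence `A ⫫ B | C` holds iff `rank Σ_{A∪C, B∪C} ≤ #C`. -/
theorem gaussian_condIndep_iff_rank_le {n : ℕ} (μ : Fin n → ℝ)
    (S : Matrix (Fin n) (Fin n) ℝ) (hS : S.PosDef)
    (A B C : Finset (Fin n)) (hAB : Disjoint A B) (hAC : Disjoint A C)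
    (hBC : Disjoint B C) :
    GaussianCondIndep μ S A B C ↔
      (S.submatrix (fun a : ↥(A ∪ C) => (a : Fin n))
          (fun b : ↥(B ∪ C) => (b : Fin n))).rank ≤ C.card := by
  classical
  set P : Matrix ↥A ↥B ℝ :=
    S.submatrix (fun a : ↥A => (a : Fin n)) (fun b : ↥B => (b : Fin n)) with hP
  set Q : Matrix ↥A ↥C ℝ :=
    S.submatrix (fun a : ↥A => (a : Fin n)) (fun c : ↥C => (c : Fin n)) with hQ
  set R : Matrix ↥C ↥B ℝ :=
    S.submatrix (fun c : ↥C => (c : Fin n)) (fun b : ↥B => (b : Fin n)) with hR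
  set T : Matrix ↥C ↥C ℝ :=
    S.submatrix (fun c : ↥C => (c : Fin n)) (fun c : ↥C => (c : Fin n)) with hT
  set M : Matrix ↥(A ∪ C) ↥(B ∪ C) ℝ :=
    S.submatrix (fun a : ↥(A ∪ C) => (a : Fin n)) (fun b : ↥(B ∪ C) => (b : Fin n)) with hM
  have hTpd : T.PosDef := posDef_submatrix' hS C
  have hTdet : IsUnit T.det := hTpd.det_pos.ne'.isUnit
  constructor
  · -- Schur complement zero → rank ≤ card C
    intro h
    have h' : P = Q * (T⁻¹ * R) := by
      have h2 : P = Q * T⁻¹ * R := sub_eq_zero.mp h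
      rw [h2, Matrix.mul_assoc]
    set U : Matrix ↥(A ∪ C) ↥C ℝ :=
      S.submatrix (fun x : ↥(A ∪ C) => (x : Fin n)) (fun c : ↥C => (c : Fin n)) with hU
    set W : Matrix ↥C ↥(B ∪ C) ℝ :=
      S.submatrix (fun c : ↥C => (c : Fin n)) (fun y : ↥(B ∪ C) => (y : Fin n)) with hW
    have key : M = U * (T⁻¹ * W) := by
      ext x y
      rcases Finset.mem_union.mp x.2 with hx | hx
      · -- x ∈ A
        have e1 : (U * (T⁻¹ * W)) x y = (Q * (T⁻¹ * W)) ⟨↑x, hx⟩ y := rfl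
        rcases Finset.mem_union.mp y.2 with hy | hy
        · -- y ∈ B
          have e2 : (Q * (T⁻¹ * W)) ⟨↑x, hx⟩ y = (Q * (T⁻¹ * R)) ⟨↑x, hx⟩ ⟨↑y, hy⟩ := rfl
          have e3 : M x y = P ⟨↑x, hx⟩ ⟨↑y, hy⟩ := rfl
          rw [e1, e2, e3, h']
        · -- y ∈ C
          have e2 : (Q * (T⁻¹ * W)) ⟨↑x, hx⟩ y = (Q * (T⁻¹ * T)) ⟨↑x, hx⟩ ⟨↑y, hy⟩ := rfl
          rw [e1, e2, Matrix.nonsing_inv_mul _ hTdet, Matrix.mul_one]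
          rfl
      · -- x ∈ C
        have e1 : (U * (T⁻¹ * W)) x y = (T * (T⁻¹ * W)) ⟨↑x, hx⟩ y := rfl
        rw [e1, ← Matrix.mul_assoc, Matrix.mul_nonsing_inv _ hTdet, Matrix.one_mul]
        rfl
    calc M.rank = (U * (T⁻¹ * W)).rank := by rw [key]
      _ ≤ U.rank := rank_mul_le_left _ _
      _ ≤ Fintype.card ↥C := rank_le_card_width U
      _ = C.card := Fintype.card_coe C
  · -- rank ≤ card C → Schur complement zero
    intro h
    show P - Q * T⁻¹ * R = 0
    ext a0 b0
    simp only [Matrix.sub_apply, Matrix.zero_apply, sub_eq_zero]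
    by_contra hne
    haveI : Invertible T := T.invertibleOfIsUnitDet hTdet
    set f : Unit ⊕ ↥C → ↥(A ∪ C) :=
      Sum.elim (fun _ => ⟨↑a0, Finset.mem_union_left _ a0.2⟩)
        (fun c => ⟨↑c, Finset.mem_union_right _ c.2⟩) with hf
    set g : Unit ⊕ ↥C → ↥(B ∪ C) :=
      Sum.elim (fun _ => ⟨↑b0, Finset.mem_union_left _ b0.2⟩)
        (fun c => ⟨↑c, Finset.mem_union_right _ c.2⟩) with hg
    set G : Matrix (Unit ⊕ ↥C) (Unit ⊕ ↥C) ℝ := M.submatrix f g with hGdef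
    have hG : G = fromBlocks (Matrix.of fun _ _ => S ↑a0 ↑b0)
        (Matrix.of fun _ c => Q a0 c) (Matrix.of fun c _ => R c b0) T := by
      ext (i | i) (j | j) <;> rfl
    have hdet : G.det ≠ 0 := by
      rw [hG, det_fromBlocks₂₂, Matrix.invOf_eq_nonsing_inv]
      refine mul_ne_zero hTpd.det_pos.ne' ?_
      rw [Matrix.det_unique]
      have e : (Matrix.of (fun (_ : Unit) c => Q a0 c) * T⁻¹ *
          Matrix.of (fun c (_ : Unit) => R c b0)) default default
          = (Q * T⁻¹ * R) a0 b0 := rfl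
      simp only [Matrix.sub_apply, e]
      exact sub_ne_zero.mpr hne
    have hrank : G.rank = 1 + C.card := by
      rw [G.rank_of_isUnit ((Matrix.isUnit_iff_isUnit_det G).2 hdet.isUnit)]
      simp [Fintype.card_coe]
    have hle : G.rank ≤ M.rank := rank_submatrix_le' M f g
    rw [hrank] at hle
    omega
end

section
/- If T is a DAG whose underlying undirected graph is a tree (a polytree), then for any pair of vertices i, j there is at most one trek from i to j; hence each trek-rule polynomial σ_{ij}(a,λ) is a monomial and the vanishing ideal I_T of the Gaussian Bayesian network of T is a toric (prime binomial) ideal. -/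
open MvPolynomial

/-- A directed acyclic graph on vertices `{0, …, n-1}`, numerically ordered:
`i → j` only if `i < j`. -/
structure DAG (n : ℕ) where
  edge : Fin n → Fin n → Bool
  increasing : ∀ i j, edge i j = true → i < j

namespace DAG

variable {n : ℕ}

/-- Indeterminates: `a_i` for each vertex (Sum.inl) and `λ_{kl}` for each
potential edge (Sum.inr). -/
abbrev Vars (n : ℕ) := Fin n ⊕ (Fin n × Fin n)

/-- `L` is the directed path from the top down to `i`, `R` from the top down to `j`;
they share exactly the top vertex, and the resulting colliderless path is simple. -/
def IsTrek (G : DAG n) (i j : Fin n) (L R : List (Fin n)) : Prop :=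
  L ≠ [] ∧ R ≠ [] ∧ L.head? = R.head? ∧ L.getLast? = some i ∧ R.getLast? = some j ∧
    L.Chain' (fun a b => G.edge a b = true) ∧ R.Chain' (fun a b => G.edge a b = true) ∧
    (L ++ R.tail).Nodup

/-- The type of treks from `i` to `j` in `G`. -/
def Trek (G : DAG n) (i j : Fin n) : Type :=
  {p : {l : List (Fin n) // l.Nodup} × {l : List (Fin n) // l.Nodup} //
    IsTrek G i j p.1.1 p.2.1}

noncomputable instance (G : DAG n) (i j : Fin n) : Fintype (Trek G i j) := by
  classical exact Subtype.fintype _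

def Trek.left {G : DAG n} {i j : Fin n} (P : Trek G i j) : List (Fin n) := P.1.1.1
def Trek.right {G : DAG n} {i j : Fin n} (P : Trek G i j) : List (Fin n) := P.1.2.1

/-- The topmost vertex of a trek. -/
def Trek.top {G : DAG n} {i j : Fin n} (P : Trek G i j) : Fin n := P.left.head?.getD i

/-- The consecutive pairs (directed edges) of a vertex list. -/
def pathEdges (l : List (Fin n)) : List (Fin n × Fin n) := l.zip l.tail

/-- The (directed) edges used by a trek. -/
def Trek.edges {G : DAG n} {i j : Fin n} (P : Trek G i j) : List (Fin n × Fin n) :=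
  pathEdges P.left ++ pathEdges P.right

/-- The monomial `a_{top(P)} · ∏_{k→l ∈ P} λ_{kl}` of a trek. -/
noncomputable def Trek.poly {G : DAG n} {i j : Fin n} (P : Trek G i j) :
    MvPolynomial (Vars n) ℂ :=
  X (Sum.inl P.top) * (P.edges.map (fun e => X (Sum.inr e))).prod

/-- The trek-rule polynomial `σ_{ij}(a,λ) = ∑_{P ∈ T(i,j)} a_{top(P)} ∏_{k→l∈P} λ_{kl}`. -/
noncomputable def trekPoly (G : DAG n) (i j : Fin n) : MvPolynomial (Vars n) ℂ :=
  ∑ P : Trek G i j, P.poly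

/-- The parent set `pa(j)` of a vertex. -/
def parents (G : DAG n) (j : Fin n) : Finset (Fin n) :=
  Finset.univ.filter (fun k => G.edge k j = true)

/-- Index set for the entries `σ_{ij}`, `1 ≤ i ≤ j ≤ n`, of a symmetric matrix. -/
abbrev SymIdx (n : ℕ) := {p : Fin n × Fin n // p.1 ≤ p.2}

/-- The variable index `σ_{ij}` (sorted). -/
def sIdx (i j : Fin n) : SymIdx n :=
  if h : i ≤ j then ⟨(i, j), h⟩ else ⟨(j, i), le_of_not_ge h⟩

/-- The trek-rule ring homomorphism `φ_G : ℂ[σ] → ℂ[a,λ]`. -/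
noncomputable def phi (G : DAG n) :
    MvPolynomial (SymIdx n) ℂ →ₐ[ℂ] MvPolynomial (Vars n) ℂ :=
  aeval (fun p => trekPoly G p.1.1 p.1.2)

/-- The vanishing ideal `I_G = ker φ_G` of the Gaussian Bayesian network of `G`. -/
noncomputable def gaussianIdeal (G : DAG n) : Ideal (MvPolynomial (SymIdx n) ℂ) :=
  RingHom.ker (phi G)

/-- The underlying undirected graph of `G`. -/
def underlying (G : DAG n) : SimpleGraph (Fin n) where
  Adj i j := G.edge i j = true ∨ G.edge j i = true
  symm := ⟨fun i j h => h.symm⟩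
  loopless := by
    constructor
    intro i h
    rcases h with h | h <;> exact absurd (G.increasing i i h) (lt_irrefl i)

/-- A polytree: a DAG whose underlying undirected graph is a tree. -/
def IsPolytree (G : DAG n) : Prop := G.underlying.IsTree

/-- `c` is a choke point between `I` and `J`: every trek from `I` to `J` contains `c`,
and `c` is on the `I`-side of every such trek, or on the `J`-side of every such trek. -/
def IsChokePoint (G : DAG n) (I J : Set (Fin n)) (c : Fin n) : Prop :=
  (∀ i ∈ I, ∀ j ∈ J, ∀ P : Trek G i j, c ∈ P.left) ∨
  (∀ i ∈ I, ∀ j ∈ J, ∀ P : Trek G i j, c ∈ P.right)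

/-- The induced subgraph on a vertex subset `S` (kept on the same vertex set). -/
def induce (G : DAG n) (S : Finset (Fin n)) : DAG n where
  edge i j := decide (G.edge i j = true ∧ i ∈ S ∧ j ∈ S)
  increasing := by
    intro i j h
    exact G.increasing i j (of_decide_eq_true h).1

/-- Indices `σ_{ij}` with both `i, j ∈ S`. -/
abbrev SubIdx (n : ℕ) (S : Finset (Fin n)) := {p : SymIdx n // p.1.1 ∈ S ∧ p.1.2 ∈ S}

/-- The trek-rule homomorphism restricted to the variables `σ_{ij}`, `i,j ∈ S`. -/
noncomputable def phiSub (G : DAG n) (S : Finset (Fin n)) :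
    MvPolynomial (SubIdx n S) ℂ →ₐ[ℂ] MvPolynomial (Vars n) ℂ :=
  aeval (fun p => trekPoly G p.1.1.1 p.1.1.2)

/-- The ideal `I_{G,S} = I_G ∩ ℂ[σ_{ij} : i,j ∈ S]` of the model with observed
variables `S` (the remaining variables hidden). -/
noncomputable def hiddenIdeal (G : DAG n) (S : Finset (Fin n)) :
    Ideal (MvPolynomial (SubIdx n S) ℂ) :=
  RingHom.ker (phiSub G S)

end DAG

section Aux

open DAG MvPolynomial

/-! ### Generic binomial-kernel machinery -/

variable {σ τ : Type*}

private lemma prod_mono_one {ι : Type*} (s : Finset ι) (h : ι → (τ →₀ ℕ)) :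
    ∏ x ∈ s, (monomial (h x) (1:ℂ)) = monomial (∑ x ∈ s, h x) 1 := by
  classical
  induction s using Finset.induction_on with
  | empty => simp
  | insert _ _ hx ih => simp [Finset.prod_insert hx, Finset.sum_insert hx, ih, monomial_mul]

private lemma aeval_monomial_cases (f : MvPolynomial σ ℂ →ₐ[ℂ] MvPolynomial τ ℂ)
    (E : σ → (τ →₀ ℕ)) (hE : ∀ s : σ, f (X s) ≠ 0 → f (X s) = monomial (E s) 1)
    (m : σ →₀ ℕ) (c : ℂ) (hB : ∀ s ∈ m.support, f (X s) ≠ 0) :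
    f (monomial m c) = monomial (m.sum fun s k => k • E s) c := by
  classical
  rw [monomial_eq, map_mul]
  have : f (m.prod fun n e => X n ^ e) = monomial (m.sum fun s k => k • E s) 1 := by
    rw [Finsupp.prod, map_prod, Finsupp.sum]
    rw [Finset.prod_congr rfl (fun s hs => ?_), prod_mono_one]
    rw [map_pow, hE s (hB s hs), monomial_pow, one_pow]
  rw [this, algHom_C, algebraMap_eq, C_mul_monomial, mul_one]

private lemma aeval_monomial_zero (f : MvPolynomial σ ℂ →ₐ[ℂ] MvPolynomial τ ℂ)
    (m : σ →₀ ℕ) (c : ℂ) (s : σ) (hs : s ∈ m.support) (h0 : f (X s) = 0) :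
    f (monomial m c) = 0 := by
  classical
  rw [monomial_eq, map_mul, Finsupp.prod, map_prod]
  rw [Finset.prod_eq_zero hs, mul_zero]
  rw [map_pow, h0, zero_pow]
  simpa using hs

private theorem ker_span_binomials (f : MvPolynomial σ ℂ →ₐ[ℂ] MvPolynomial τ ℂ)
    (hf : ∀ s : σ, f (X s) = 0 ∨ ∃ e : τ →₀ ℕ, f (X s) = monomial e 1) :
    ∃ S : Set (MvPolynomial σ ℂ), RingHom.ker f = Ideal.span S ∧
      ∀ g ∈ S, ∃ (m₁ m₂ : σ →₀ ℕ) (c₁ c₂ : ℂ),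
        g = monomial m₁ c₁ + monomial m₂ c₂ := by
  classical
  set S : Set (MvPolynomial σ ℂ) :=
    {g | g ∈ RingHom.ker f ∧ ∃ (m₁ m₂ : σ →₀ ℕ) (c₁ c₂ : ℂ),
        g = monomial m₁ c₁ + monomial m₂ c₂} with hS
  refine ⟨S, ?_, fun g hg => hg.2⟩
  have hEex : ∀ s : σ, ∃ e : τ →₀ ℕ, f (X s) ≠ 0 → f (X s) = monomial e 1 := by
    intro s
    rcases hf s with h0 | ⟨e, he⟩
    · exact ⟨0, fun h => absurd h0 h⟩
    · exact ⟨e, fun _ => he⟩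
  choose E hE using hEex
  set A : (σ →₀ ℕ) → (τ →₀ ℕ) := fun m => m.sum fun s k => k • E s with hA
  have key : ∀ N (p : MvPolynomial σ ℂ), p.support.card ≤ N → f p = 0 →
      p ∈ Ideal.span S := by
    intro N
    induction N with
    | zero =>
      intro p hp _
      have : p = 0 := by
        rw [← support_eq_empty, ← Finset.card_eq_zero]; omega
      simp [this]
    | succ N ih =>
      intro p hp hker
      by_cases hp0 : p = 0
      · simp [hp0]
      obtain ⟨m, hm⟩ := (support_nonempty.2 hp0)
      set c := coeff m p with hc
      have hc0 : c ≠ 0 := mem_support_iff.1 hm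
      by_cases hcase : ∀ s ∈ m.support, f (X s) ≠ 0
      · -- case B
        have hfm : f (monomial m c) = monomial (A m) c :=
          aeval_monomial_cases f E hE m c hcase
        have hsum : ∑ m' ∈ p.support,
            coeff (A m) (f (monomial m' (coeff m' p))) = 0 := by
          have : f p = ∑ m' ∈ p.support, f (monomial m' (coeff m' p)) := by
            conv_lhs => rw [p.as_sum]
            rw [map_sum]
          rw [← coeff_sum, ← this, hker, coeff_zero]
        have hne : ∃ m' ∈ p.support, m' ≠ m ∧
            coeff (A m) (f (monomial m' (coeff m' p))) ≠ 0 := by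
          by_contra hcon
          push_neg at hcon
          have : ∑ m' ∈ p.support, coeff (A m) (f (monomial m' (coeff m' p))) =
              coeff (A m) (f (monomial m c)) := by
            rw [Finset.sum_eq_single_of_mem m hm]
            intro b hb hbm
            exact hcon b hb hbm
          rw [hsum, hfm, coeff_monomial, if_pos rfl] at this
          exact hc0 this.symm
        obtain ⟨m', hm's, hm'ne, hm'c⟩ := hne
        have hcase' : ∀ s ∈ m'.support, f (X s) ≠ 0 := by
          intro s hs
          by_contra h0
          rw [aeval_monomial_zero f m' _ s hs h0, coeff_zero] at hm'c
          exact hm'c rfl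
        have hfm' : f (monomial m' (coeff m' p)) = monomial (A m') (coeff m' p) :=
          aeval_monomial_cases f E hE m' _ hcase'
        have hAA : A m' = A m := by
          rw [hfm', coeff_monomial] at hm'c
          by_contra hne
          rw [if_neg hne] at hm'c
          exact hm'c rfl
        set g : MvPolynomial σ ℂ := monomial m c + monomial m' (-c) with hg
        have hgker : f g = 0 := by
          rw [hg, map_add, hfm,
            aeval_monomial_cases f E hE m' (-c) hcase',
            show (m'.sum fun s k => k • E s) = A m from hAA,
            ← map_add, add_neg_cancel, map_zero]
        have hgS : g ∈ S := ⟨hgker, m, m', c, -c, rfl⟩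
        have hsub : (p - g).support ⊆ p.support.erase m := by
          intro x hx
          rw [mem_support_iff] at hx
          rcases eq_or_ne x m with rfl | hxm
          · exfalso
            apply hx
            simp [hg, coeff_sub, coeff_add, coeff_monomial, if_neg hm'ne, hc]
          · refine Finset.mem_erase.2 ⟨hxm, mem_support_iff.2 fun h => hx ?_⟩
            rcases eq_or_ne x m' with rfl | hxm'
            · exact absurd h (mem_support_iff.1 hm's)
            · simp [hg, coeff_sub, coeff_add, coeff_monomial,
                if_neg (Ne.symm hxm), if_neg (Ne.symm hxm'), h]
        have hsubker : f (p - g) = 0 := by rw [map_sub, hker, hgker, sub_zero]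
        have hcard : (p - g).support.card ≤ N := by
          have h1 := Finset.card_le_card hsub
          have h2 : (p.support.erase m).card < p.support.card :=
            Finset.card_erase_lt_of_mem hm
          omega
        have : p = (p - g) + g := by ring
        rw [this]
        exact Ideal.add_mem _ (ih (p - g) hcard hsubker)
          (Ideal.subset_span hgS)
      · -- case A: some variable maps to 0
        push_neg at hcase
        obtain ⟨s, hs, h0⟩ := hcase
        set g : MvPolynomial σ ℂ := monomial m c with hg
        have hgker : f g = 0 := aeval_monomial_zero f m c s hs h0
        have hgS : g ∈ S := ⟨hgker, m, m, c, 0, by simp [hg]⟩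
        have hsub : (p - g).support ⊆ p.support.erase m := by
          intro x hx
          rw [mem_support_iff] at hx
          rcases eq_or_ne x m with rfl | hxm
          · exact absurd (by simp [hg, coeff_sub, coeff_monomial, hc]) hx
          · refine Finset.mem_erase.2 ⟨hxm, mem_support_iff.2 fun h => hx ?_⟩
            simp [hg, coeff_sub, coeff_monomial, if_neg (Ne.symm hxm), h]
        have hsubker : f (p - g) = 0 := by rw [map_sub, hker, hgker, sub_zero]
        have hcard : (p - g).support.card ≤ N := by
          have h1 := Finset.card_le_card hsub
          have h2 : (p.support.erase m).card < p.support.card :=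
            Finset.card_erase_lt_of_mem hm
          omega
        have : p = (p - g) + g := by ring
        rw [this]
        exact Ideal.add_mem _ (ih (p - g) hcard hsubker)
          (Ideal.subset_span hgS)
  apply le_antisymm
  · intro p hp
    exact key p.support.card p le_rfl (RingHom.mem_ker.1 hp)
  · rw [Ideal.span_le]
    intro g hg
    exact hg.1

/-! ### Walks from chains -/

private def walkOfChain {V : Type*} {G : SimpleGraph V} :
    ∀ (l : List V) (hne : l ≠ []) (_ : l.Chain' G.Adj),
    G.Walk (l.head hne) (l.getLast hne)
  | [_], _, _ => SimpleGraph.Walk.nil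
  | _ :: b :: t, _, hc =>
      SimpleGraph.Walk.cons (List.isChain_cons_cons.1 hc).1
        (walkOfChain (b :: t) (by simp) (List.isChain_cons_cons.1 hc).2)

private theorem walkOfChain_support {V : Type*} {G : SimpleGraph V} :
    ∀ (l : List V) (hne : l ≠ []) (hc : l.Chain' G.Adj),
    (walkOfChain l hne hc).support = l
  | [_], _, _ => rfl
  | _ :: b :: t, _, hc => by
      exact congrArg (List.cons _) (walkOfChain_support (b :: t) _ _)

private lemma getElem_congr' {α : Type*} (l : List α) {a b : ℕ} (h : a = b)
    (ha : a < l.length) : l[a]'ha = l[b]'(h ▸ ha) := by subst h; rfl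

private lemma chain'_getElem {α : Type*} {Rr : α → α → Prop} {l : List α}
    (h : l.Chain' Rr) (s : ℕ) (hs : s + 1 < l.length) :
    Rr (l[s]'(by omega)) (l[s+1]'hs) :=
  List.isChain_iff_getElem.1 h s (by omega)

variable {n : ℕ}

/-- The undirected support list of a trek is the support of an `i`–`j` path. -/
private lemma trek_walk (G : DAG n) {i j : Fin n} {L R : List (Fin n)}
    (h : IsTrek G i j L R) :
    ∃ w : G.underlying.Walk i j, w.IsPath ∧ w.support = L.reverse ++ R.tail := by
  classical
  obtain ⟨hL0, hR0, hhd, hLlast, hRlast, hLch, hRch, hnd⟩ := h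
  set W : List (Fin n) := L.reverse ++ R.tail with hWdef
  have hLrev : L.reverse ≠ [] := by simpa using hL0
  have hW0 : W ≠ [] := by
    rw [hWdef]
    exact fun h => hLrev (List.append_eq_nil_iff.1 h).1
  have hWhead : W.head? = some i := by
    rw [hWdef, List.head?_append_of_ne_nil _ hLrev, List.head?_reverse, hLlast]
  have hWlast : W.getLast? = some j := by
    rcases eq_or_ne R.tail [] with htl | htl
    · have hR1 : R = [j] := by
        obtain ⟨a, ta, rfl⟩ := List.exists_cons_of_ne_nil hR0
        simp at htl
        subst htl
        simpa using hRlast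
      rw [hWdef, htl, List.append_nil, List.getLast?_reverse]
      rw [hR1] at hhd
      simpa using hhd
    · rw [hWdef, List.getLast?_append_of_ne_nil _ htl]
      obtain ⟨a, ta, rfl⟩ := List.exists_cons_of_ne_nil hR0
      simp only [List.tail_cons] at htl ⊢
      rw [show a :: ta = [a] ++ ta from rfl,
        List.getLast?_append_of_ne_nil _ htl] at hRlast
      exact hRlast
  have hWch : W.Chain' G.underlying.Adj := by
    rw [hWdef, List.Chain', List.isChain_append]
    refine ⟨?_, ?_, ?_⟩
    · rw [List.isChain_reverse]
      exact List.IsChain.imp (fun a b hab => Or.inr hab) hLch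
    · exact (List.IsChain.tail hRch).imp (fun a b hab => Or.inl hab)
    · intro x hx y hy
      rw [List.getLast?_reverse, hhd] at hx
      obtain ⟨a, ta, rfl⟩ := List.exists_cons_of_ne_nil hR0
      simp only [List.head?_cons, Option.mem_def, Option.some.injEq] at hx
      subst hx
      simp only [List.tail_cons] at hy
      have := List.isChain_cons.1 hRch
      exact Or.inl (this.1 y hy)
  have hWnd : W.Nodup := by
    rw [hWdef]
    exact (((List.reverse_perm L).append_right R.tail).symm).nodup hnd
  have hh : W.head hW0 = i := by
    have := List.head?_eq_head (l := W) hW0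
    rw [hWhead] at this
    exact (Option.some_injective _ this).symm
  have hl : W.getLast hW0 = j := by
    have := List.getLast?_eq_getLast (l := W) hW0
    rw [hWlast] at this
    exact (Option.some_injective _ this).symm
  refine ⟨(walkOfChain W hW0 hWch).copy hh hl, ?_, ?_⟩
  · rw [SimpleGraph.Walk.isPath_def, SimpleGraph.Walk.support_copy,
      walkOfChain_support]
    exact hWnd
  · rw [SimpleGraph.Walk.support_copy, walkOfChain_support]

private lemma trek_dir_left (G : DAG n) {i j : Fin n} {L R : List (Fin n)}
    (h : IsTrek G i j L R) {W : List (Fin n)} (hWeq : W = L.reverse ++ R.tail)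
    (s : ℕ) (hs : s + 1 < L.length)
    (h1 : s + 1 < W.length) :
    G.edge (W[s+1]'h1) (W[s]'(by omega)) = true := by
  subst hWeq
  obtain ⟨hL0, hR0, hhd, hLlast, hRlast, hLch, hRch, hnd⟩ := h
  have hLr : s + 1 < L.reverse.length := by simpa using hs
  rw [List.getElem_append_left hLr,
    List.getElem_append_left (by omega : s < L.reverse.length)]
  have hLrch : L.reverse.Chain' (fun a b => G.edge b a = true) := by
    rw [List.Chain', List.isChain_reverse]
    exact hLch
  exact chain'_getElem hLrch s hLr

set_option maxHeartbeats 1000000 in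
private lemma trek_dir_right (G : DAG n) {i j : Fin n} {L R : List (Fin n)}
    (h : IsTrek G i j L R) {W : List (Fin n)} (hWeq : W = L.reverse ++ R.tail)
    (s : ℕ) (hs : L.length ≤ s + 1)
    (h1 : s + 1 < W.length) :
    G.edge (W[s]'(by omega)) (W[s+1]'h1) = true := by
  subst hWeq
  obtain ⟨hL0, hR0, hhd, hLlast, hRlast, hLch, hRch, hnd⟩ := h
  have hWlen : (L.reverse ++ R.tail).length = L.length + R.tail.length := by simp
  have hRlen : R.length = R.tail.length + 1 := by
    obtain ⟨a, ta, rfl⟩ := List.exists_cons_of_ne_nil hR0; simp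
  have ht1 : 1 ≤ L.length := by
    obtain ⟨a, ta, rfl⟩ := List.exists_cons_of_ne_nil hL0; simp
  have hsR : L.length ≤ s + 1 := hs
  have hW1 : (L.reverse ++ R.tail)[s+1]'h1 = R[s + 2 - L.length]'(by omega) := by
    rw [List.getElem_append_right (by simpa using hsR)]
    rw [List.getElem_tail]
    apply getElem_congr'
    simp; omega
  rcases eq_or_lt_of_le hs with heq | hlt
  · have hW0 : (L.reverse ++ R.tail)[s]'(by omega) = R[0]'(by omega) := by
      rw [List.getElem_append_left (by simpa using (by omega : s < L.length))]
      rw [List.getElem_reverse]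
      have hL0e : L[L.length - 1 - s]'(by omega) = L[0]'(by omega) :=
        getElem_congr' _ (by omega) _
      rw [hL0e, List.getElem_zero, List.getElem_zero]
      have h1' := List.head?_eq_head (l := L) hL0
      have h2' := List.head?_eq_head (l := R) hR0
      rw [h1', h2'] at hhd
      exact Option.some_injective _ hhd
    rw [hW0, hW1, getElem_congr' R (by omega : s + 2 - L.length = 0 + 1)]
    exact chain'_getElem hRch 0 (by omega)
  · have hW0 : (L.reverse ++ R.tail)[s]'(by omega) = R[s + 1 - L.length]'(by omega) := by
      rw [List.getElem_append_right (by simpa using (by omega : L.length ≤ s))]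
      rw [List.getElem_tail]
      apply getElem_congr'
      simp; omega
    rw [hW0, hW1,
      getElem_congr' R (by omega : s + 2 - L.length = (s + 1 - L.length) + 1)]
    exact chain'_getElem hRch (s + 1 - L.length) (by omega)

private lemma not_length_lt (G : DAG n) {i j : Fin n} {L R L' R' : List (Fin n)}
    (hP : IsTrek G i j L R) (hQ : IsTrek G i j L' R')
    (hW : L.reverse ++ R.tail = L'.reverse ++ R'.tail) :
    ¬ L.length < L'.length := by
  intro hlt
  set W := L.reverse ++ R.tail with hWdef
  set t := L.length with ht
  have ht1 : 1 ≤ t := List.length_pos_iff.2 hP.1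
  have hWlen : L'.length ≤ W.length := by
    rw [hW]; simp
  have hb : (t - 1) + 1 < W.length := by omega
  have e1 := trek_dir_right G hP hWdef (t - 1) (by omega) hb
  have e2 := trek_dir_left G hQ hW (t - 1) (by omega) hb
  have lt1 := G.increasing _ _ e1
  have lt2 := G.increasing _ _ e2
  exact absurd lt1 (asymm lt2)

private lemma trek_split_eq (G : DAG n) {i j : Fin n} {L R L' R' : List (Fin n)}
    (hP : IsTrek G i j L R) (hQ : IsTrek G i j L' R')
    (hW : L.reverse ++ R.tail = L'.reverse ++ R'.tail) :
    L = L' ∧ R = R' := by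
  have h1 := not_length_lt G hP hQ hW
  have h2 := not_length_lt G hQ hP hW.symm
  have hlen : L.length = L'.length := by omega
  obtain ⟨hLrev, hRtl⟩ := List.append_inj hW (by simpa using hlen)
  have hL : L = L' := List.reverse_injective hLrev
  refine ⟨hL, ?_⟩
  have hhd : R.head? = R'.head? := by
    rw [← hP.2.2.1, ← hQ.2.2.1, hL]
  obtain ⟨a, ta, rfl⟩ := List.exists_cons_of_ne_nil hP.2.1
  obtain ⟨b, tb, rfl⟩ := List.exists_cons_of_ne_nil hQ.2.1
  simp only [List.head?_cons, Option.some.injEq] at hhd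
  simp only [List.tail_cons] at hRtl
  rw [hhd, hRtl]

private theorem trek_lists_eq (T : DAG n) (hT : T.IsPolytree)
    {i j : Fin n} {L R L' R' : List (Fin n)}
    (hP : IsTrek T i j L R) (hQ : IsTrek T i j L' R') : L = L' ∧ R = R' := by
  obtain ⟨wP, hwP, hsP⟩ := trek_walk T hP
  obtain ⟨wQ, hwQ, hsQ⟩ := trek_walk T hQ
  obtain ⟨w, -, huniq⟩ := hT.existsUnique_path i j
  have : wP = wQ := (huniq wP hwP).trans (huniq wQ hwQ).symm
  exact trek_split_eq T hP hQ (by rw [← hsP, ← hsQ, this])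

private theorem trekSubsingleton (T : DAG n) (hT : T.IsPolytree) (i j : Fin n) :
    Subsingleton (Trek T i j) := by
  constructor
  rintro ⟨⟨⟨L, hLnd⟩, ⟨R, hRnd⟩⟩, hPt⟩ ⟨⟨⟨L', hL'nd⟩, ⟨R', hR'nd⟩⟩, hQt⟩
  obtain ⟨hL, hR⟩ := trek_lists_eq T hT hPt hQt
  subst hL
  subst hR
  rfl

private lemma polyList_monomial :
    ∀ l : List (Fin n × Fin n), ∃ m : Vars n →₀ ℕ,
      ((l.map fun e => X (Sum.inr e)).prod : MvPolynomial (Vars n) ℂ) = monomial m 1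
  | [] => ⟨0, by simp⟩
  | e :: t => by
      obtain ⟨m, hm⟩ := polyList_monomial t
      refine ⟨Finsupp.single (Sum.inr e) 1 + m, ?_⟩
      rw [List.map_cons, List.prod_cons, hm,
        show (X (Sum.inr e) : MvPolynomial (Vars n) ℂ) =
          monomial (Finsupp.single (Sum.inr e) 1) 1 from rfl,
        monomial_mul, mul_one]

private lemma trekPoly_cases (T : DAG n) (hT : T.IsPolytree) (i j : Fin n) :
    trekPoly T i j = 0 ∨ ∃ m : Vars n →₀ ℕ, trekPoly T i j = monomial m 1 := by
  haveI := trekSubsingleton T hT i j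
  rcases isEmpty_or_nonempty (Trek T i j) with he | hne
  · left
    rw [trekPoly, Finset.univ_eq_empty, Finset.sum_empty]
  · right
    obtain ⟨P⟩ := hne
    obtain ⟨m, hm⟩ := polyList_monomial P.edges
    refine ⟨Finsupp.single (Sum.inl P.top) 1 + m, ?_⟩
    rw [trekPoly, Fintype.sum_subsingleton _ P, Trek.poly, hm,
      show (X (Sum.inl P.top) : MvPolynomial (Vars n) ℂ) =
        monomial (Finsupp.single (Sum.inl P.top) 1) 1 from rfl,
      monomial_mul, mul_one]

end Aux

open DAG MvPolynomial in
/-- If `T` is a polytree then there is at most one trek between any two vertices,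
each trek-rule polynomial `σ_{ij}(a,λ)` is a monomial, and the vanishing ideal `I_T`
is a toric ideal: a prime ideal generated by binomials. -/
theorem polytree_toric {n : ℕ} (T : DAG n) (hT : T.IsPolytree) :
    (∀ i j : Fin n, Subsingleton (Trek T i j)) ∧
    (∀ i j : Fin n, ∃ (m : Vars n →₀ ℕ) (c : ℂ), trekPoly T i j = monomial m c) ∧
    (gaussianIdeal T).IsPrime ∧
    (∃ S : Set (MvPolynomial (SymIdx n) ℂ), gaussianIdeal T = Ideal.span S ∧
      ∀ f ∈ S, ∃ (m₁ m₂ : SymIdx n →₀ ℕ) (c₁ c₂ : ℂ),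
        f = monomial m₁ c₁ + monomial m₂ c₂) := by
  refine ⟨trekSubsingleton T hT, ?_, ?_, ?_⟩
  · intro i j
    rcases trekPoly_cases T hT i j with h | ⟨m, h⟩
    · exact ⟨0, 0, by simp [h]⟩
    · exact ⟨m, 1, h⟩
  · exact RingHom.ker_isPrime _
  · obtain ⟨S, hS1, hS2⟩ := ker_span_binomials (phi T) (fun p => by
      rw [phi, aeval_X]
      exact trekPoly_cases T hT p.1.1 p.1.2)
    exact ⟨S, hS1, hS2⟩
end

section
/- Join of parametrized ideals: let φ : C[x₁,...,x_m] → C[θ] and ψ : C[x₁,...,x_m] → C[η] be ring homomorphisms into polynomial rings in disjoint sets of variables, with I = ker φ and J = ker ψ. Then the join ideal I ∗ J, defined as (I(y) + J(z) + ⟨x_i − y_i − z_i : i ∈ [m]⟩) ∩ C[x], equals the kernel of the map φ + ψ : C[x] → C[θ, η] sending x_i ↦ φ(x_i) + ψ(x_i). -/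
open MvPolynomial TensorProduct

noncomputable def sumToTensorAux (σ τ : Type*) :
    MvPolynomial (σ ⊕ τ) ℂ ≃ₐ[ℂ] MvPolynomial σ ℂ ⊗[ℂ] MvPolynomial τ ℂ :=
  AlgEquiv.ofAlgHom
    (aeval (Sum.elim (fun i => X i ⊗ₜ[ℂ] 1) (fun j => (1 : MvPolynomial σ ℂ) ⊗ₜ[ℂ] X j)))
    (Algebra.TensorProduct.lift (rename Sum.inl) (rename Sum.inr) fun _ _ => Commute.all _ _)
    (by ext x <;> simp)
    (by ext i <;> cases i <;> simp)

lemma sumToTensorAux_symm_comp_includeLeft (σ τ : Type*) :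
    ((sumToTensorAux σ τ).symm.toAlgHom.comp Algebra.TensorProduct.includeLeft :
      MvPolynomial σ ℂ →ₐ[ℂ] MvPolynomial (σ ⊕ τ) ℂ) = rename Sum.inl := by
  ext i; simp [sumToTensorAux]

lemma sumToTensorAux_symm_comp_includeRight (σ τ : Type*) :
    ((sumToTensorAux σ τ).symm.toAlgHom.comp Algebra.TensorProduct.includeRight :
      MvPolynomial τ ℂ →ₐ[ℂ] MvPolynomial (σ ⊕ τ) ℂ) = rename Sum.inr := by
  ext i; simp [sumToTensorAux]

lemma algKerCompInj {A B C : Type*} [CommRing A] [CommRing B] [CommRing C]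
    [Algebra ℂ A] [Algebra ℂ B] [Algebra ℂ C]
    (f : A →ₐ[ℂ] B) (g : B →ₐ[ℂ] C) (hg : Function.Injective g) :
    RingHom.ker (g.comp f) = RingHom.ker f := by
  ext x
  simp only [RingHom.mem_ker, AlgHom.comp_apply]
  constructor
  · intro h; apply hg; rwa [map_zero]
  · intro h; rw [h, map_zero]

lemma algMapMap {A B C : Type*} [CommRing A] [CommRing B] [CommRing C]
    [Algebra ℂ A] [Algebra ℂ B] [Algebra ℂ C]
    (f : A →ₐ[ℂ] B) (g : B →ₐ[ℂ] C) (I : Ideal A) :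
    Ideal.map g (Ideal.map f I) = Ideal.map (g.comp f) I := by
  have h1 : Ideal.map g (Ideal.map f I) = Ideal.map g.toRingHom (Ideal.map f.toRingHom I) := rfl
  rw [h1, Ideal.map_map]
  rfl

lemma algComapEquiv {A B : Type*} [CommRing A] [CommRing B]
    [Algebra ℂ A] [Algebra ℂ B] (e : A ≃ₐ[ℂ] B) (K : Ideal B) :
    Ideal.comap e.toAlgHom K = Ideal.map e.symm.toAlgHom K := by
  have := Ideal.map_symm (I := K) e.toRingEquiv
  have h2 : Ideal.map e.symm.toAlgHom K = Ideal.map e.toRingEquiv.symm K := rfl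
  have h3 : Ideal.comap e.toAlgHom K = Ideal.comap e.toRingEquiv K := rfl
  rw [h2, h3, ← this]

-- injectivity of tensor map of injective alg homs over ℂ
lemma tensorMapInj {A B C D : Type*} [CommRing A] [CommRing B] [CommRing C] [CommRing D]
    [Algebra ℂ A] [Algebra ℂ B] [Algebra ℂ C] [Algebra ℂ D]
    (f : A →ₐ[ℂ] B) (g : C →ₐ[ℂ] D) (hf : Function.Injective f) (hg : Function.Injective g) :
    Function.Injective (Algebra.TensorProduct.map f g) := by
  have h1 : Algebra.TensorProduct.map f g
      = (Algebra.TensorProduct.map f (AlgHom.id ℂ D)).comp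
        (Algebra.TensorProduct.map (AlgHom.id ℂ A) g) := by
    rw [← Algebra.TensorProduct.map_comp]; simp
  rw [h1]
  apply Function.Injective.comp (g := ⇑(Algebra.TensorProduct.map f (AlgHom.id ℂ D)))
  · show Function.Injective ⇑(LinearMap.rTensor D f.toLinearMap)
    exact Module.Flat.rTensor_preserves_injective_linearMap f.toLinearMap hf
  · show Function.Injective ⇑(LinearMap.lTensor A g.toLinearMap)
    exact Module.Flat.lTensor_preserves_injective_linearMap g.toLinearMap hg

lemma ker_rangeRestrict' {A B : Type*} [CommRing A] [CommRing B]
    [Algebra ℂ A] [Algebra ℂ B] (f : A →ₐ[ℂ] B) :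
    RingHom.ker f.rangeRestrict = RingHom.ker f := by
  ext x
  rw [RingHom.mem_ker, RingHom.mem_ker, ← Subtype.coe_inj]
  exact Iff.rfl

lemma core_ker {α β : Type*} (m : ℕ)
    (φ : MvPolynomial (Fin m) ℂ →ₐ[ℂ] MvPolynomial α ℂ)
    (ψ : MvPolynomial (Fin m) ℂ →ₐ[ℂ] MvPolynomial β ℂ) :
    RingHom.ker (aeval (Sum.elim (fun i => rename (Sum.inl : α → α ⊕ β) (φ (X i)))
        (fun i => rename (Sum.inr : β → α ⊕ β) (ψ (X i)))) :
      MvPolynomial (Fin m ⊕ Fin m) ℂ →ₐ[ℂ] MvPolynomial (α ⊕ β) ℂ)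
    = Ideal.map (rename (Sum.inl : Fin m → Fin m ⊕ Fin m) :
          MvPolynomial (Fin m) ℂ →ₐ[ℂ] MvPolynomial (Fin m ⊕ Fin m) ℂ) (RingHom.ker φ)
      ⊔ Ideal.map (rename (Sum.inr : Fin m → Fin m ⊕ Fin m) :
          MvPolynomial (Fin m) ℂ →ₐ[ℂ] MvPolynomial (Fin m ⊕ Fin m) ℂ) (RingHom.ker ψ) := by
  set exx := sumToTensorAux (Fin m) (Fin m) with hexx
  set eab := sumToTensorAux α β with heab
  have hΘ : (aeval (Sum.elim (fun i => rename (Sum.inl : α → α ⊕ β) (φ (X i)))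
        (fun i => rename (Sum.inr : β → α ⊕ β) (ψ (X i)))) :
      MvPolynomial (Fin m ⊕ Fin m) ℂ →ₐ[ℂ] MvPolynomial (α ⊕ β) ℂ)
      = (eab.symm.toAlgHom.comp (Algebra.TensorProduct.map φ ψ)).comp exx.toAlgHom := by
    ext i
    cases i <;> simp [hexx, heab, sumToTensorAux]
  rw [hΘ, ← AlgHom.comap_ker,
    algKerCompInj (Algebra.TensorProduct.map φ ψ) eab.symm.toAlgHom eab.symm.injective]
  -- factor map φ ψ through range restrictions
  have hφ : (φ.range.val).comp φ.rangeRestrict = φ := by ext x; rfl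
  have hψ : (ψ.range.val).comp ψ.rangeRestrict = ψ := by ext x; rfl
  have hfac : Algebra.TensorProduct.map φ ψ
      = (Algebra.TensorProduct.map φ.range.val ψ.range.val).comp
        (Algebra.TensorProduct.map φ.rangeRestrict ψ.rangeRestrict) := by
    rw [← Algebra.TensorProduct.map_comp, hφ, hψ]
  rw [hfac, algKerCompInj _ _
      (tensorMapInj _ _ Subtype.val_injective Subtype.val_injective),
    Algebra.TensorProduct.map_ker _ _ φ.rangeRestrict_surjective ψ.rangeRestrict_surjective,
    ker_rangeRestrict', ker_rangeRestrict']
  rw [algComapEquiv exx _, Ideal.map_sup,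
    algMapMap Algebra.TensorProduct.includeLeft exx.symm.toAlgHom,
    algMapMap Algebra.TensorProduct.includeRight exx.symm.toAlgHom,
    sumToTensorAux_symm_comp_includeLeft, sumToTensorAux_symm_comp_includeRight]


/-- Join of parametrized ideals: if `I = ker φ` and `J = ker ψ` for ring maps
`φ : ℂ[x₁,…,x_m] → ℂ[θ]` and `ψ : ℂ[x₁,…,x_m] → ℂ[η]` into polynomial rings in
disjoint sets of variables, then the join ideal
`I ∗ J = (I(y) + J(z) + ⟨xᵢ − yᵢ − zᵢ⟩) ∩ ℂ[x]` equals the kernel of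
`φ + ψ : ℂ[x] → ℂ[θ, η]`, `xᵢ ↦ φ(xᵢ) + ψ(xᵢ)`. -/
theorem join_of_parametrized_ideals (m : ℕ) {α β : Type*}
    (φ : MvPolynomial (Fin m) ℂ →ₐ[ℂ] MvPolynomial α ℂ)
    (ψ : MvPolynomial (Fin m) ℂ →ₐ[ℂ] MvPolynomial β ℂ) :
    Ideal.comap
        (rename (Sum.inl : Fin m → Fin m ⊕ (Fin m ⊕ Fin m)) :
          MvPolynomial (Fin m) ℂ →ₐ[ℂ] MvPolynomial (Fin m ⊕ (Fin m ⊕ Fin m)) ℂ)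
        (Ideal.map
            (rename ((Sum.inr ∘ Sum.inl) : Fin m → Fin m ⊕ (Fin m ⊕ Fin m)) :
              MvPolynomial (Fin m) ℂ →ₐ[ℂ] MvPolynomial (Fin m ⊕ (Fin m ⊕ Fin m)) ℂ)
            (RingHom.ker φ) ⊔
          Ideal.map
            (rename ((Sum.inr ∘ Sum.inr) : Fin m → Fin m ⊕ (Fin m ⊕ Fin m)) :
              MvPolynomial (Fin m) ℂ →ₐ[ℂ] MvPolynomial (Fin m ⊕ (Fin m ⊕ Fin m)) ℂ)
            (RingHom.ker ψ) ⊔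
          Ideal.span {f | ∃ i : Fin m,
            f = X (Sum.inl i) - X (Sum.inr (Sum.inl i)) - X (Sum.inr (Sum.inr i))}) =
      RingHom.ker
        (aeval (fun i : Fin m =>
            rename (Sum.inl : α → α ⊕ β) (φ (X i)) +
            rename (Sum.inr : β → α ⊕ β) (ψ (X i))) :
          MvPolynomial (Fin m) ℂ →ₐ[ℂ] MvPolynomial (α ⊕ β) ℂ) := by
  set Ξ : MvPolynomial (Fin m) ℂ →ₐ[ℂ] MvPolynomial (α ⊕ β) ℂ :=
    aeval (fun i : Fin m =>
      rename (Sum.inl : α → α ⊕ β) (φ (X i)) +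
      rename (Sum.inr : β → α ⊕ β) (ψ (X i))) with hΞ
  set Θ : MvPolynomial (Fin m ⊕ Fin m) ℂ →ₐ[ℂ] MvPolynomial (α ⊕ β) ℂ :=
    aeval (Sum.elim (fun i => rename (Sum.inl : α → α ⊕ β) (φ (X i)))
      (fun i => rename (Sum.inr : β → α ⊕ β) (ψ (X i)))) with hΘ
  set Φbig : MvPolynomial (Fin m ⊕ (Fin m ⊕ Fin m)) ℂ →ₐ[ℂ] MvPolynomial (α ⊕ β) ℂ :=
    aeval (Sum.elim
      (fun i => rename (Sum.inl : α → α ⊕ β) (φ (X i)) +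
        rename (Sum.inr : β → α ⊕ β) (ψ (X i)))
      (Sum.elim (fun i => rename (Sum.inl : α → α ⊕ β) (φ (X i)))
        (fun i => rename (Sum.inr : β → α ⊕ β) (ψ (X i))))) with hΦbig
  apply le_antisymm
  · -- K ≤ ker Φbig, and Φbig ∘ rename inl = Ξ
    have hKer : (Ideal.map
            (rename ((Sum.inr ∘ Sum.inl) : Fin m → Fin m ⊕ (Fin m ⊕ Fin m)) :
              MvPolynomial (Fin m) ℂ →ₐ[ℂ] MvPolynomial (Fin m ⊕ (Fin m ⊕ Fin m)) ℂ)
            (RingHom.ker φ) ⊔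
          Ideal.map
            (rename ((Sum.inr ∘ Sum.inr) : Fin m → Fin m ⊕ (Fin m ⊕ Fin m)) :
              MvPolynomial (Fin m) ℂ →ₐ[ℂ] MvPolynomial (Fin m ⊕ (Fin m ⊕ Fin m)) ℂ)
            (RingHom.ker ψ) ⊔
          Ideal.span {f | ∃ i : Fin m,
            f = X (Sum.inl i) - X (Sum.inr (Sum.inl i)) - X (Sum.inr (Sum.inr i))})
        ≤ RingHom.ker Φbig := by
      refine sup_le (sup_le ?_ ?_) ?_
      · rw [Ideal.map_le_iff_le_comap]
        intro p hp
        have hcomp : Φbig.comp (rename (Sum.inr ∘ Sum.inl))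
            = ((rename (Sum.inl : α → α ⊕ β)).comp φ :
                MvPolynomial (Fin m) ℂ →ₐ[ℂ] MvPolynomial (α ⊕ β) ℂ) := by
          ext i; simp [hΦbig]
        rw [Ideal.mem_comap, RingHom.mem_ker, ← AlgHom.comp_apply, hcomp,
          AlgHom.comp_apply, RingHom.mem_ker.mp hp, map_zero]
      · rw [Ideal.map_le_iff_le_comap]
        intro p hp
        have hcomp : Φbig.comp (rename (Sum.inr ∘ Sum.inr))
            = ((rename (Sum.inr : β → α ⊕ β)).comp ψ :
                MvPolynomial (Fin m) ℂ →ₐ[ℂ] MvPolynomial (α ⊕ β) ℂ) := by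
          ext i; simp [hΦbig]
        rw [Ideal.mem_comap, RingHom.mem_ker, ← AlgHom.comp_apply, hcomp,
          AlgHom.comp_apply, RingHom.mem_ker.mp hp, map_zero]
      · rw [Ideal.span_le]
        rintro f ⟨i, rfl⟩
        simp only [SetLike.mem_coe, RingHom.mem_ker, map_sub]
        simp [hΦbig]
    intro f hf
    have hcompΞ : Φbig.comp (rename (Sum.inl : Fin m → Fin m ⊕ (Fin m ⊕ Fin m))) = Ξ := by
      ext i; simp [hΦbig, hΞ]
    have := hKer hf
    rw [RingHom.mem_ker] at this ⊢
    rw [← hcompΞ, AlgHom.comp_apply]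
    exact this
  · intro f hf
    set g : Fin m → MvPolynomial (Fin m ⊕ Fin m) ℂ :=
      fun i => X (Sum.inl i) + X (Sum.inr i) with hg
    have hΘcomp : Θ.comp (aeval g) = Ξ := by
      ext i; simp [hg, hΘ, hΞ]
    have hh : aeval g f ∈
        Ideal.map (rename (Sum.inl : Fin m → Fin m ⊕ Fin m) :
            MvPolynomial (Fin m) ℂ →ₐ[ℂ] MvPolynomial (Fin m ⊕ Fin m) ℂ) (RingHom.ker φ)
        ⊔ Ideal.map (rename (Sum.inr : Fin m → Fin m ⊕ Fin m) :
            MvPolynomial (Fin m) ℂ →ₐ[ℂ] MvPolynomial (Fin m ⊕ Fin m) ℂ) (RingHom.ker ψ) := by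
      rw [← core_ker m φ ψ, RingHom.mem_ker, ← AlgHom.comp_apply, hΘcomp]
      exact hf
    -- push into the big ring
    have hc1 : ((rename (Sum.inr : Fin m ⊕ Fin m → Fin m ⊕ (Fin m ⊕ Fin m))).comp
        (rename (Sum.inl : Fin m → Fin m ⊕ Fin m)))
        = (rename ((Sum.inr ∘ Sum.inl) : Fin m → Fin m ⊕ (Fin m ⊕ Fin m)) :
            MvPolynomial (Fin m) ℂ →ₐ[ℂ] MvPolynomial (Fin m ⊕ (Fin m ⊕ Fin m)) ℂ) := by
      ext i; simp
    have hc2 : ((rename (Sum.inr : Fin m ⊕ Fin m → Fin m ⊕ (Fin m ⊕ Fin m))).comp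
        (rename (Sum.inr : Fin m → Fin m ⊕ Fin m)))
        = (rename ((Sum.inr ∘ Sum.inr) : Fin m → Fin m ⊕ (Fin m ⊕ Fin m)) :
            MvPolynomial (Fin m) ℂ →ₐ[ℂ] MvPolynomial (Fin m ⊕ (Fin m ⊕ Fin m)) ℂ) := by
      ext i; simp
    have h2 : rename (Sum.inr : Fin m ⊕ Fin m → Fin m ⊕ (Fin m ⊕ Fin m)) (aeval g f) ∈
        Ideal.map
            (rename ((Sum.inr ∘ Sum.inl) : Fin m → Fin m ⊕ (Fin m ⊕ Fin m)) :
              MvPolynomial (Fin m) ℂ →ₐ[ℂ] MvPolynomial (Fin m ⊕ (Fin m ⊕ Fin m)) ℂ)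
            (RingHom.ker φ) ⊔
          Ideal.map
            (rename ((Sum.inr ∘ Sum.inr) : Fin m → Fin m ⊕ (Fin m ⊕ Fin m)) :
              MvPolynomial (Fin m) ℂ →ₐ[ℂ] MvPolynomial (Fin m ⊕ (Fin m ⊕ Fin m)) ℂ)
            (RingHom.ker ψ) := by
      have := Ideal.mem_map_of_mem
        (rename (Sum.inr : Fin m ⊕ Fin m → Fin m ⊕ (Fin m ⊕ Fin m)) :
          MvPolynomial (Fin m ⊕ Fin m) ℂ →ₐ[ℂ] MvPolynomial (Fin m ⊕ (Fin m ⊕ Fin m)) ℂ) hh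
      rwa [Ideal.map_sup, algMapMap, algMapMap, hc1, hc2] at this
    -- the difference is in the linear span
    have hsub : rename (Sum.inl : Fin m → Fin m ⊕ (Fin m ⊕ Fin m)) f
        - rename (Sum.inr : Fin m ⊕ Fin m → Fin m ⊕ (Fin m ⊕ Fin m)) (aeval g f)
        ∈ Ideal.span {f : MvPolynomial (Fin m ⊕ (Fin m ⊕ Fin m)) ℂ | ∃ i : Fin m,
            f = X (Sum.inl i) - X (Sum.inr (Sum.inl i)) - X (Sum.inr (Sum.inr i))} := by
      set S : Ideal (MvPolynomial (Fin m ⊕ (Fin m ⊕ Fin m)) ℂ) :=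
        Ideal.span {f | ∃ i : Fin m,
          f = X (Sum.inl i) - X (Sum.inr (Sum.inl i)) - X (Sum.inr (Sum.inr i))} with hS
      set π := Ideal.Quotient.mkₐ ℂ S with hπ
      have key : π.comp (rename (Sum.inl : Fin m → Fin m ⊕ (Fin m ⊕ Fin m)))
          = π.comp ((rename (Sum.inr : Fin m ⊕ Fin m → Fin m ⊕ (Fin m ⊕ Fin m))).comp
              (aeval g)) := by
        ext i
        simp only [AlgHom.comp_apply, aeval_X, hg, rename_X, hπ,
          Ideal.Quotient.mkₐ_eq_mk, map_add]
        rw [← map_add, Ideal.Quotient.eq]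
        have : X (Sum.inl i) - (X (Sum.inr (Sum.inl i)) + X (Sum.inr (Sum.inr i)) :
            MvPolynomial (Fin m ⊕ (Fin m ⊕ Fin m)) ℂ)
            = X (Sum.inl i) - X (Sum.inr (Sum.inl i)) - X (Sum.inr (Sum.inr i)) := by ring
        rw [this]
        exact Ideal.subset_span ⟨i, rfl⟩
      have := DFunLike.congr_fun key f
      simp only [AlgHom.comp_apply, hπ, Ideal.Quotient.mkₐ_eq_mk] at this
      rwa [Ideal.Quotient.eq] at this
    rw [Ideal.mem_comap]
    have hdecomp : rename (Sum.inl : Fin m → Fin m ⊕ (Fin m ⊕ Fin m)) f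
        = (rename (Sum.inl : Fin m → Fin m ⊕ (Fin m ⊕ Fin m)) f
            - rename (Sum.inr : Fin m ⊕ Fin m → Fin m ⊕ (Fin m ⊕ Fin m)) (aeval g f))
          + rename (Sum.inr : Fin m ⊕ Fin m → Fin m ⊕ (Fin m ⊕ Fin m)) (aeval g f) := by
      ring
    rw [hdecomp]
    exact Ideal.add_mem _ (Ideal.mem_sup_right hsub) (Ideal.mem_sup_left h2)
end
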